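/- Let η, ρ be real constants with η ≠ 0, and let F(u, w, w̃) be a smooth real-valued function on an open set U ⊆ ℝ³. Define V = (η²F − F_{uu})/4, S = (ηF_w − F_{uw})/2, and S̃ = (ηF_{w̃} + F_{uw̃})/2. Then: (i) the identities S_u + ηS = 2V_w and −S̃_u + ηS̃ = 2V_{w̃} hold on U for every such F; and (ii) F satisfies equation (EWred) on U if and only if V·(S_{w̃} + S̃_w) = η(S·S̃ − e^{2ρu}) on U. -/

import Mathlib

noncomputable section

/-- Partial derivatives of F(u, w, w̃) in its three arguments. -/
def pu (F : ℝ → ℝ → ℝ → ℝ) : ℝ → ℝ → ℝ → ℝ := fun u w wt => deriv (fun s => F s w wt) u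
def pw (F : ℝ → ℝ → ℝ → ℝ) : ℝ → ℝ → ℝ → ℝ := fun u w wt => deriv (fun s => F u s wt) w
def pwt (F : ℝ → ℝ → ℝ → ℝ) : ℝ → ℝ → ℝ → ℝ := fun u w wt => deriv (fun s => F u w s) wt

/-- Equation (EWred):
(η F_{w̃} + F_{uw̃})(η F_w − F_{uw}) − (η²F − F_{uu}) F_{ww̃} = 4 e^{2ρu}. -/
def EWred (η ρ : ℝ) (F : ℝ → ℝ → ℝ → ℝ) (u w wt : ℝ) : Prop :=
  (η * pwt F u w wt + pwt (pu F) u w wt) * (η * pw F u w wt - pw (pu F) u w wt)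
    - (η ^ 2 * F u w wt - pu (pu F) u w wt) * pwt (pw F) u w wt
    = 4 * Real.exp (2 * ρ * u)

namespace EWredAux
open Topology Filter

def unc (G : ℝ → ℝ → ℝ → ℝ) : ℝ × ℝ × ℝ → ℝ := fun p => G p.1 p.2.1 p.2.2

variable {U : Set (ℝ × ℝ × ℝ)}

lemma diffAt {X : Type*} [NormedAddCommGroup X] [NormedSpace ℝ X]
    (hU : IsOpen U) {H : ℝ × ℝ × ℝ → X} (hH : ContDiffOn ℝ (⊤ : ℕ∞) H U)
    {p : ℝ × ℝ × ℝ} (hp : p ∈ U) : DifferentiableAt ℝ H p :=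
  (hH.contDiffAt (hU.mem_nhds hp)).differentiableAt (by simp)

lemma sliceu (H : ℝ × ℝ × ℝ → ℝ) {u w wt : ℝ} (h : DifferentiableAt ℝ H (u, w, wt)) :
    HasDerivAt (fun s => H (s, w, wt)) (fderiv ℝ H (u, w, wt) (1, 0, 0)) u := by
  have hline : HasDerivAt (fun s : ℝ => ((s, w, wt) : ℝ × ℝ × ℝ)) (1, 0, 0) u :=
    HasDerivAt.prodMk (hasDerivAt_id u) (hasDerivAt_const u (w, wt))
  exact h.hasFDerivAt.comp_hasDerivAt u hline

lemma slicew (H : ℝ × ℝ × ℝ → ℝ) {u w wt : ℝ} (h : DifferentiableAt ℝ H (u, w, wt)) :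
    HasDerivAt (fun s => H (u, s, wt)) (fderiv ℝ H (u, w, wt) (0, 1, 0)) w := by
  have hline : HasDerivAt (fun s : ℝ => ((u, s, wt) : ℝ × ℝ × ℝ)) (0, 1, 0) w :=
    HasDerivAt.prodMk (hasDerivAt_const w u) (HasDerivAt.prodMk (hasDerivAt_id w) (hasDerivAt_const w wt))
  exact h.hasFDerivAt.comp_hasDerivAt w hline

lemma slicewt (H : ℝ × ℝ × ℝ → ℝ) {u w wt : ℝ} (h : DifferentiableAt ℝ H (u, w, wt)) :
    HasDerivAt (fun s => H (u, w, s)) (fderiv ℝ H (u, w, wt) (0, 0, 1)) wt := by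
  have hline : HasDerivAt (fun s : ℝ => ((u, w, s) : ℝ × ℝ × ℝ)) (0, 0, 1) wt :=
    HasDerivAt.prodMk (hasDerivAt_const wt u) (HasDerivAt.prodMk (hasDerivAt_const wt w) (hasDerivAt_id wt))
  exact h.hasFDerivAt.comp_hasDerivAt wt hline

lemma hasDerivAt_pu (hU : IsOpen U) {G : ℝ → ℝ → ℝ → ℝ}
    (hG : ContDiffOn ℝ (⊤ : ℕ∞) (unc G) U) {u w wt : ℝ} (hp : (u, w, wt) ∈ U) :
    HasDerivAt (fun s => G s w wt) (pu G u w wt) u := by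
  have h := sliceu (unc G) (diffAt hU hG hp)
  have h2 : pu G u w wt = fderiv ℝ (unc G) (u, w, wt) (1, 0, 0) := h.deriv
  rw [h2]; exact h

lemma hasDerivAt_pw (hU : IsOpen U) {G : ℝ → ℝ → ℝ → ℝ}
    (hG : ContDiffOn ℝ (⊤ : ℕ∞) (unc G) U) {u w wt : ℝ} (hp : (u, w, wt) ∈ U) :
    HasDerivAt (fun s => G u s wt) (pw G u w wt) w := by
  have h := slicew (unc G) (diffAt hU hG hp)
  have h2 : pw G u w wt = fderiv ℝ (unc G) (u, w, wt) (0, 1, 0) := h.deriv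
  rw [h2]; exact h

lemma hasDerivAt_pwt (hU : IsOpen U) {G : ℝ → ℝ → ℝ → ℝ}
    (hG : ContDiffOn ℝ (⊤ : ℕ∞) (unc G) U) {u w wt : ℝ} (hp : (u, w, wt) ∈ U) :
    HasDerivAt (fun s => G u w s) (pwt G u w wt) wt := by
  have h := slicewt (unc G) (diffAt hU hG hp)
  have h2 : pwt G u w wt = fderiv ℝ (unc G) (u, w, wt) (0, 0, 1) := h.deriv
  rw [h2]; exact h

lemma pu_rep (hU : IsOpen U) {G : ℝ → ℝ → ℝ → ℝ}
    (hG : ContDiffOn ℝ (⊤ : ℕ∞) (unc G) U) {u w wt : ℝ} (hp : (u, w, wt) ∈ U) :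
    pu G u w wt = fderiv ℝ (unc G) (u, w, wt) (1, 0, 0) :=
  (sliceu (unc G) (diffAt hU hG hp)).deriv

lemma pw_rep (hU : IsOpen U) {G : ℝ → ℝ → ℝ → ℝ}
    (hG : ContDiffOn ℝ (⊤ : ℕ∞) (unc G) U) {u w wt : ℝ} (hp : (u, w, wt) ∈ U) :
    pw G u w wt = fderiv ℝ (unc G) (u, w, wt) (0, 1, 0) :=
  (slicew (unc G) (diffAt hU hG hp)).deriv

lemma pwt_rep (hU : IsOpen U) {G : ℝ → ℝ → ℝ → ℝ}
    (hG : ContDiffOn ℝ (⊤ : ℕ∞) (unc G) U) {u w wt : ℝ} (hp : (u, w, wt) ∈ U) :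
    pwt G u w wt = fderiv ℝ (unc G) (u, w, wt) (0, 0, 1) :=
  (slicewt (unc G) (diffAt hU hG hp)).deriv

lemma smooth_dir (hU : IsOpen U) {H : ℝ × ℝ × ℝ → ℝ}
    (hH : ContDiffOn ℝ (⊤ : ℕ∞) H U) (v : ℝ × ℝ × ℝ) :
    ContDiffOn ℝ (⊤ : ℕ∞) (fun q => fderiv ℝ H q v) U :=
  (hH.fderiv_of_isOpen hU (le_of_eq rfl)).clm_apply contDiffOn_const

lemma smooth_pu (hU : IsOpen U) {G : ℝ → ℝ → ℝ → ℝ}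
    (hG : ContDiffOn ℝ (⊤ : ℕ∞) (unc G) U) :
    ContDiffOn ℝ (⊤ : ℕ∞) (unc (pu G)) U :=
  (smooth_dir hU hG (1, 0, 0)).congr fun q hq => by
    obtain ⟨u, w, wt⟩ := q; exact pu_rep hU hG hq

lemma smooth_pw (hU : IsOpen U) {G : ℝ → ℝ → ℝ → ℝ}
    (hG : ContDiffOn ℝ (⊤ : ℕ∞) (unc G) U) :
    ContDiffOn ℝ (⊤ : ℕ∞) (unc (pw G)) U :=
  (smooth_dir hU hG (0, 1, 0)).congr fun q hq => by
    obtain ⟨u, w, wt⟩ := q; exact pw_rep hU hG hq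

lemma smooth_pwt (hU : IsOpen U) {G : ℝ → ℝ → ℝ → ℝ}
    (hG : ContDiffOn ℝ (⊤ : ℕ∞) (unc G) U) :
    ContDiffOn ℝ (⊤ : ℕ∞) (unc (pwt G)) U :=
  (smooth_dir hU hG (0, 0, 1)).congr fun q hq => by
    obtain ⟨u, w, wt⟩ := q; exact pwt_rep hU hG hq

lemma fderiv_dir (hU : IsOpen U) {H : ℝ × ℝ × ℝ → ℝ}
    (hH : ContDiffOn ℝ (⊤ : ℕ∞) H U) {p : ℝ × ℝ × ℝ} (hp : p ∈ U) (v a : ℝ × ℝ × ℝ) :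
    fderiv ℝ (fun q => fderiv ℝ H q v) p a = fderiv ℝ (fderiv ℝ H) p a v := by
  have hd : DifferentiableAt ℝ (fderiv ℝ H) p :=
    diffAt hU (hH.fderiv_of_isOpen hU (le_of_eq rfl)) hp
  rw [fderiv_clm_apply hd (differentiableAt_const v)]
  simp

lemma symm2 (hU : IsOpen U) {H : ℝ × ℝ × ℝ → ℝ}
    (hH : ContDiffOn ℝ (⊤ : ℕ∞) H U) {p : ℝ × ℝ × ℝ} (hp : p ∈ U) (a b : ℝ × ℝ × ℝ) :
    fderiv ℝ (fderiv ℝ H) p a b = fderiv ℝ (fderiv ℝ H) p b a := by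
  apply second_derivative_symmetric_of_eventually (f := H) (f' := fderiv ℝ H)
  · filter_upwards [hU.mem_nhds hp] with y hy using (diffAt hU hH hy).hasFDerivAt
  · exact (diffAt hU (hH.fderiv_of_isOpen hU (le_of_eq rfl)) hp).hasFDerivAt


lemma pu_rep' (hU : IsOpen U) {G' : ℝ → ℝ → ℝ → ℝ} {H' : ℝ × ℝ × ℝ → ℝ}
    (hH' : ContDiffOn ℝ (⊤ : ℕ∞) H' U) (heq : ∀ q ∈ U, unc G' q = H' q)
    {u w wt : ℝ} (hp : (u, w, wt) ∈ U) :
    pu G' u w wt = fderiv ℝ H' (u, w, wt) (1, 0, 0) := by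
  have hmem : ∀ᶠ s in 𝓝 u, (s, w, wt) ∈ U :=
    (Continuous.continuousAt (f := fun s : ℝ => ((s, w, wt) : ℝ × ℝ × ℝ))
      (by continuity)).preimage_mem_nhds (hU.mem_nhds hp)
  have hev : (fun s => G' s w wt) =ᶠ[𝓝 u] fun s => H' (s, w, wt) := by
    filter_upwards [hmem] with s hs using heq (s, w, wt) hs
  have h0 : pu G' u w wt = deriv (fun s => H' (s, w, wt)) u := hev.deriv_eq
  rw [h0]; exact (sliceu H' (diffAt hU hH' hp)).deriv

lemma pw_rep' (hU : IsOpen U) {G' : ℝ → ℝ → ℝ → ℝ} {H' : ℝ × ℝ × ℝ → ℝ}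
    (hH' : ContDiffOn ℝ (⊤ : ℕ∞) H' U) (heq : ∀ q ∈ U, unc G' q = H' q)
    {u w wt : ℝ} (hp : (u, w, wt) ∈ U) :
    pw G' u w wt = fderiv ℝ H' (u, w, wt) (0, 1, 0) := by
  have hmem : ∀ᶠ s in 𝓝 w, (u, s, wt) ∈ U :=
    (Continuous.continuousAt (f := fun s : ℝ => ((u, s, wt) : ℝ × ℝ × ℝ))
      (by continuity)).preimage_mem_nhds (hU.mem_nhds hp)
  have hev : (fun s => G' u s wt) =ᶠ[𝓝 w] fun s => H' (u, s, wt) := by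
    filter_upwards [hmem] with s hs using heq (u, s, wt) hs
  have h0 : pw G' u w wt = deriv (fun s => H' (u, s, wt)) w := hev.deriv_eq
  rw [h0]; exact (slicew H' (diffAt hU hH' hp)).deriv

lemma pwt_rep' (hU : IsOpen U) {G' : ℝ → ℝ → ℝ → ℝ} {H' : ℝ × ℝ × ℝ → ℝ}
    (hH' : ContDiffOn ℝ (⊤ : ℕ∞) H' U) (heq : ∀ q ∈ U, unc G' q = H' q)
    {u w wt : ℝ} (hp : (u, w, wt) ∈ U) :
    pwt G' u w wt = fderiv ℝ H' (u, w, wt) (0, 0, 1) := by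
  have hmem : ∀ᶠ s in 𝓝 wt, (u, w, s) ∈ U :=
    (Continuous.continuousAt (f := fun s : ℝ => ((u, w, s) : ℝ × ℝ × ℝ))
      (by continuity)).preimage_mem_nhds (hU.mem_nhds hp)
  have hev : (fun s => G' u w s) =ᶠ[𝓝 wt] fun s => H' (u, w, s) := by
    filter_upwards [hmem] with s hs using heq (u, w, s) hs
  have h0 : pwt G' u w wt = deriv (fun s => H' (u, w, s)) wt := hev.deriv_eq
  rw [h0]; exact (slicewt H' (diffAt hU hH' hp)).deriv

lemma comm_uw (hU : IsOpen U) {G : ℝ → ℝ → ℝ → ℝ}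
    (hG : ContDiffOn ℝ (⊤ : ℕ∞) (unc G) U) {u w wt : ℝ} (hp : (u, w, wt) ∈ U) :
    pu (pw G) u w wt = pw (pu G) u w wt := by
  have h1 : pu (pw G) u w wt
      = fderiv ℝ (fun q => fderiv ℝ (unc G) q (0, 1, 0)) (u, w, wt) (1, 0, 0) :=
    pu_rep' hU (smooth_dir hU hG (0, 1, 0))
      (fun q hq => by obtain ⟨a, b, c⟩ := q; exact pw_rep hU hG hq) hp
  have h2 : pw (pu G) u w wt
      = fderiv ℝ (fun q => fderiv ℝ (unc G) q (1, 0, 0)) (u, w, wt) (0, 1, 0) :=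
    pw_rep' hU (smooth_dir hU hG (1, 0, 0))
      (fun q hq => by obtain ⟨a, b, c⟩ := q; exact pu_rep hU hG hq) hp
  rw [h1, h2, fderiv_dir hU hG hp _ _, fderiv_dir hU hG hp _ _]
  exact symm2 hU hG hp _ _

lemma comm_uwt (hU : IsOpen U) {G : ℝ → ℝ → ℝ → ℝ}
    (hG : ContDiffOn ℝ (⊤ : ℕ∞) (unc G) U) {u w wt : ℝ} (hp : (u, w, wt) ∈ U) :
    pu (pwt G) u w wt = pwt (pu G) u w wt := by
  have h1 : pu (pwt G) u w wt
      = fderiv ℝ (fun q => fderiv ℝ (unc G) q (0, 0, 1)) (u, w, wt) (1, 0, 0) :=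
    pu_rep' hU (smooth_dir hU hG (0, 0, 1))
      (fun q hq => by obtain ⟨a, b, c⟩ := q; exact pwt_rep hU hG hq) hp
  have h2 : pwt (pu G) u w wt
      = fderiv ℝ (fun q => fderiv ℝ (unc G) q (1, 0, 0)) (u, w, wt) (0, 0, 1) :=
    pwt_rep' hU (smooth_dir hU hG (1, 0, 0))
      (fun q hq => by obtain ⟨a, b, c⟩ := q; exact pu_rep hU hG hq) hp
  rw [h1, h2, fderiv_dir hU hG hp _ _, fderiv_dir hU hG hp _ _]
  exact symm2 hU hG hp _ _

lemma comm_wwt (hU : IsOpen U) {G : ℝ → ℝ → ℝ → ℝ}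
    (hG : ContDiffOn ℝ (⊤ : ℕ∞) (unc G) U) {u w wt : ℝ} (hp : (u, w, wt) ∈ U) :
    pw (pwt G) u w wt = pwt (pw G) u w wt := by
  have h1 : pw (pwt G) u w wt
      = fderiv ℝ (fun q => fderiv ℝ (unc G) q (0, 0, 1)) (u, w, wt) (0, 1, 0) :=
    pw_rep' hU (smooth_dir hU hG (0, 0, 1))
      (fun q hq => by obtain ⟨a, b, c⟩ := q; exact pwt_rep hU hG hq) hp
  have h2 : pwt (pw G) u w wt
      = fderiv ℝ (fun q => fderiv ℝ (unc G) q (0, 1, 0)) (u, w, wt) (0, 0, 1) :=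
    pwt_rep' hU (smooth_dir hU hG (0, 1, 0))
      (fun q hq => by obtain ⟨a, b, c⟩ := q; exact pw_rep hU hG hq) hp
  rw [h1, h2, fderiv_dir hU hG hp _ _, fderiv_dir hU hG hp _ _]
  exact symm2 hU hG hp _ _

end EWredAux

open EWredAux

/-- With V = (η²F − F_{uu})/4, S = (ηF_w − F_{uw})/2,
S̃ = (ηF_{w̃} + F_{uw̃})/2, one has (i) S_u + ηS = 2V_w and −S̃_u + ηS̃ = 2V_{w̃} on U
for every smooth F; and (ii) F satisfies (EWred) on U iff
V·(S_{w̃} + S̃_w) = η(S·S̃ − e^{2ρu}) on U. -/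
theorem EWred_first_order_form (η ρ : ℝ) (hη : η ≠ 0)
    (U : Set (ℝ × ℝ × ℝ)) (hU : IsOpen U)
    (F : ℝ → ℝ → ℝ → ℝ)
    (hF : ContDiffOn ℝ (⊤ : ℕ∞) (fun p : ℝ × ℝ × ℝ => F p.1 p.2.1 p.2.2) U)
    (V S St : ℝ → ℝ → ℝ → ℝ)
    (hV : ∀ u w wt : ℝ, V u w wt = (η ^ 2 * F u w wt - pu (pu F) u w wt) / 4)
    (hS : ∀ u w wt : ℝ, S u w wt = (η * pw F u w wt - pw (pu F) u w wt) / 2)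
    (hSt : ∀ u w wt : ℝ, St u w wt = (η * pwt F u w wt + pwt (pu F) u w wt) / 2) :
    (∀ p ∈ U, pu S p.1 p.2.1 p.2.2 + η * S p.1 p.2.1 p.2.2 = 2 * pw V p.1 p.2.1 p.2.2
        ∧ -pu St p.1 p.2.1 p.2.2 + η * St p.1 p.2.1 p.2.2 = 2 * pwt V p.1 p.2.1 p.2.2)
    ∧ ((∀ p ∈ U, EWred η ρ F p.1 p.2.1 p.2.2)
        ↔ (∀ p ∈ U, V p.1 p.2.1 p.2.2 * (pwt S p.1 p.2.1 p.2.2 + pw St p.1 p.2.1 p.2.2)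
            = η * (S p.1 p.2.1 p.2.2 * St p.1 p.2.1 p.2.2 - Real.exp (2 * ρ * p.1)))) := by
  have hF' : ContDiffOn ℝ (⊤ : ℕ∞) (unc F) U := hF
  have hFu : ContDiffOn ℝ (⊤ : ℕ∞) (unc (pu F)) U := smooth_pu hU hF'
  have hFw : ContDiffOn ℝ (⊤ : ℕ∞) (unc (pw F)) U := smooth_pw hU hF'
  have hFwt : ContDiffOn ℝ (⊤ : ℕ∞) (unc (pwt F)) U := smooth_pwt hU hF'
  have hFuu : ContDiffOn ℝ (⊤ : ℕ∞) (unc (pu (pu F))) U := smooth_pu hU hFu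
  have hFuw : ContDiffOn ℝ (⊤ : ℕ∞) (unc (pw (pu F))) U := smooth_pw hU hFu
  have hFuwt : ContDiffOn ℝ (⊤ : ℕ∞) (unc (pwt (pu F))) U := smooth_pwt hU hFu
  constructor
  · rintro ⟨u, w, wt⟩ hp
    -- derivatives of S, St, V
    have dS : HasDerivAt (fun s => S s w wt)
        ((η * pu (pw F) u w wt - pu (pw (pu F)) u w wt) / 2) u := by
      have hfun : (fun s => S s w wt)
          = fun s => (η * pw F s w wt - pw (pu F) s w wt) / 2 := funext fun s => hS s w wt
      rw [hfun]
      exact (((hasDerivAt_pu hU hFw hp).const_mul η).sub (hasDerivAt_pu hU hFuw hp)).div_const 2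
    have hpuS : pu S u w wt = (η * pu (pw F) u w wt - pu (pw (pu F)) u w wt) / 2 := dS.deriv
    have dSt : HasDerivAt (fun s => St s w wt)
        ((η * pu (pwt F) u w wt + pu (pwt (pu F)) u w wt) / 2) u := by
      have hfun : (fun s => St s w wt)
          = fun s => (η * pwt F s w wt + pwt (pu F) s w wt) / 2 := funext fun s => hSt s w wt
      rw [hfun]
      exact (((hasDerivAt_pu hU hFwt hp).const_mul η).add (hasDerivAt_pu hU hFuwt hp)).div_const 2
    have hpuSt : pu St u w wt = (η * pu (pwt F) u w wt + pu (pwt (pu F)) u w wt) / 2 := dSt.deriv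
    have dVw : HasDerivAt (fun s => V u s wt)
        ((η ^ 2 * pw F u w wt - pw (pu (pu F)) u w wt) / 4) w := by
      have hfun : (fun s => V u s wt)
          = fun s => (η ^ 2 * F u s wt - pu (pu F) u s wt) / 4 := funext fun s => hV u s wt
      rw [hfun]
      exact (((hasDerivAt_pw hU hF' hp).const_mul (η ^ 2)).sub
        (hasDerivAt_pw hU hFuu hp)).div_const 4
    have hpwV : pw V u w wt = (η ^ 2 * pw F u w wt - pw (pu (pu F)) u w wt) / 4 := dVw.deriv
    have dVwt : HasDerivAt (fun s => V u w s)
        ((η ^ 2 * pwt F u w wt - pwt (pu (pu F)) u w wt) / 4) wt := by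
      have hfun : (fun s => V u w s)
          = fun s => (η ^ 2 * F u w s - pu (pu F) u w s) / 4 := funext fun s => hV u w s
      rw [hfun]
      exact (((hasDerivAt_pwt hU hF' hp).const_mul (η ^ 2)).sub
        (hasDerivAt_pwt hU hFuu hp)).div_const 4
    have hpwtV : pwt V u w wt = (η ^ 2 * pwt F u w wt - pwt (pu (pu F)) u w wt) / 4 := dVwt.deriv
    have c1 : pu (pw F) u w wt = pw (pu F) u w wt := comm_uw hU hF' hp
    have c2 : pu (pw (pu F)) u w wt = pw (pu (pu F)) u w wt := comm_uw hU hFu hp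
    have c3 : pu (pwt F) u w wt = pwt (pu F) u w wt := comm_uwt hU hF' hp
    have c4 : pu (pwt (pu F)) u w wt = pwt (pu (pu F)) u w wt := comm_uwt hU hFu hp
    constructor
    · rw [hpuS, hS u w wt, hpwV, c1, c2]; ring
    · rw [hpuSt, hSt u w wt, hpwtV, c3, c4]; ring
  · have key : ∀ p ∈ U, (EWred η ρ F p.1 p.2.1 p.2.2
        ↔ V p.1 p.2.1 p.2.2 * (pwt S p.1 p.2.1 p.2.2 + pw St p.1 p.2.1 p.2.2)
            = η * (S p.1 p.2.1 p.2.2 * St p.1 p.2.1 p.2.2 - Real.exp (2 * ρ * p.1))) := by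
      rintro ⟨u, w, wt⟩ hp
      have dSwt : HasDerivAt (fun s => S u w s)
          ((η * pwt (pw F) u w wt - pwt (pw (pu F)) u w wt) / 2) wt := by
        have hfun : (fun s => S u w s)
            = fun s => (η * pw F u w s - pw (pu F) u w s) / 2 := funext fun s => hS u w s
        rw [hfun]
        exact (((hasDerivAt_pwt hU hFw hp).const_mul η).sub
          (hasDerivAt_pwt hU hFuw hp)).div_const 2
      have hpwtS : pwt S u w wt
          = (η * pwt (pw F) u w wt - pwt (pw (pu F)) u w wt) / 2 := dSwt.deriv
      have dStw : HasDerivAt (fun s => St u s wt)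
          ((η * pw (pwt F) u w wt + pw (pwt (pu F)) u w wt) / 2) w := by
        have hfun : (fun s => St u s wt)
            = fun s => (η * pwt F u s wt + pwt (pu F) u s wt) / 2 := funext fun s => hSt u s wt
        rw [hfun]
        exact (((hasDerivAt_pw hU hFwt hp).const_mul η).add
          (hasDerivAt_pw hU hFuwt hp)).div_const 2
      have hpwSt : pw St u w wt
          = (η * pw (pwt F) u w wt + pw (pwt (pu F)) u w wt) / 2 := dStw.deriv
      have c5 : pw (pwt F) u w wt = pwt (pw F) u w wt := comm_wwt hU hF' hp
      have c6 : pw (pwt (pu F)) u w wt = pwt (pw (pu F)) u w wt := comm_wwt hU hFu hp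
      have hne : (-(η / 4) : ℝ) ≠ 0 := neg_ne_zero.mpr (div_ne_zero hη (by norm_num))
      rw [EWred, hpwtS, hpwSt, hV u w wt, hS u w wt, hSt u w wt, c5, c6]
      constructor
      · intro h; linear_combination (-(η / 4)) * h
      · intro h; exact mul_left_cancel₀ hne (by linear_combination h)
    exact ⟨fun h p hp => (key p hp).1 (h p hp), fun h p hp => (key p hp).2 (h p hp)⟩


end
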